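/- For each window w_r, each 0 ≤ m ≤ N/L−1, (L/N) Σ_{m'=0}^{N/L−1} Z(w_r, m') e^{−2πi m m' L / N} = Σ_{j'=0}^{L−1} α(m + j'N/L) β_r(m + j'N/L), where α and β_r are the discrete Fourier coefficients of |x|² and |w_r|² respectively. -/

import Mathlib

/-- Multiple-window short-time Fourier transform. -/
noncomputable def stft {N : ℕ} [NeZero N] (L : ℕ) (x w : ZMod N → ℂ) (m k : ℕ) : ℂ :=
  (N : ℂ)⁻¹ * ∑ n : ZMod N, x n * w (((L * m : ℕ) : ZMod N) - n) *
    Complex.exp (-(2 * Real.pi * Complex.I * (k : ℂ) * (n.val : ℂ)) / (N : ℂ))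

/-- DFT of the squared magnitudes of a vector: `(1/N) ∑_n |u(n)|² e^{-2πikn/N}`. -/
noncomputable def dftSq {N : ℕ} [NeZero N] (u : ZMod N → ℂ) (k : ℕ) : ℂ :=
  (N : ℂ)⁻¹ * ∑ n : ZMod N, (‖u n‖ ^ 2 : ℝ) *
    Complex.exp (-(2 * Real.pi * Complex.I * (k : ℂ) * (n.val : ℂ)) / (N : ℂ))

open Complex Finset

set_option linter.unusedVariables false

lemma geom_dft (M : ℕ) (hM : 0 < M) (a : ℤ) :
    ∑ k ∈ Finset.range M, (Complex.exp (-(2 * Real.pi * Complex.I * a) / M)) ^ k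
      = if (M:ℤ) ∣ a then (M:ℂ) else 0 := by
  have hMC : (M:ℂ) ≠ 0 := Nat.cast_ne_zero.mpr hM.ne'
  set z := Complex.exp (-(2 * Real.pi * Complex.I * a) / M) with hz
  by_cases h : (M:ℤ) ∣ a
  · obtain ⟨t, ht⟩ := h
    have hz1 : z = 1 := by
      rw [hz, ht]
      rw [show (-(2 * Real.pi * Complex.I * ((M:ℤ)*t :ℤ)) / M : ℂ) = ((-t : ℤ) : ℂ) * (2*Real.pi*Complex.I) by push_cast; field_simp]
      exact Complex.exp_int_mul_two_pi_mul_I _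
    simp [hz1, ht]
  · have hpi : (2*(Real.pi:ℂ)*Complex.I) ≠ 0 := by
      simp [Real.pi_ne_zero, Complex.I_ne_zero]
    have hz1 : z ≠ 1 := by
      rw [hz]
      intro hc
      rw [Complex.exp_eq_one_iff] at hc
      obtain ⟨n, hn⟩ := hc
      apply h
      rw [div_eq_iff hMC] at hn
      have h2 : (2*(Real.pi:ℂ)*Complex.I) * a = (2*(Real.pi:ℂ)*Complex.I) * ((-n*M : ℤ):ℂ) := by
        push_cast; linear_combination -hn
      have h3 : (a:ℂ) = ((-n*M : ℤ):ℂ) := mul_left_cancel₀ hpi h2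
      have h4 : a = -n*M := by exact_mod_cast h3
      exact ⟨-n, by linarith⟩
    have hzM : z ^ M = 1 := by
      rw [hz, ← Complex.exp_nat_mul]
      rw [show ((M:ℂ) * (-(2 * Real.pi * Complex.I * a) / M)) = ((-a : ℤ):ℂ) * (2*Real.pi*Complex.I) by push_cast; field_simp]
      exact Complex.exp_int_mul_two_pi_mul_I _
    rw [geom_sum_eq hz1, hzM, if_neg h]
    simp

noncomputable def eN (N a : ℕ) : ℂ := Complex.exp (-(2 * Real.pi * Complex.I * a) / N)

lemma eN_add (N a b : ℕ) : eN N (a+b) = eN N a * eN N b := by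
  rw [eN, eN, eN, ← Complex.exp_add]
  congr 1
  push_cast
  ring

lemma eN_mul_self (N t : ℕ) [NeZero N] : eN N (N*t) = 1 := by
  have hNC : (N:ℂ) ≠ 0 := Nat.cast_ne_zero.mpr (NeZero.ne N)
  rw [eN, show (-(2 * Real.pi * Complex.I * ((N*t : ℕ):ℂ)) / N : ℂ) = ((-t : ℤ) : ℂ) * (2*Real.pi*Complex.I) by push_cast; field_simp]
  exact Complex.exp_int_mul_two_pi_mul_I _

lemma eN_mod (N a : ℕ) [NeZero N] : eN N a = eN N (a % N) := by
  conv_lhs => rw [show a = N * (a/N) + a % N from (Nat.div_add_mod a N).symm]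
  rw [eN_add, eN_mul_self, one_mul]

lemma eN_congr (N a b : ℕ) [NeZero N] (h : a % N = b % N) : eN N a = eN N b := by
  rw [eN_mod, h, ← eN_mod]

-- conj of exponential
lemma conj_eN (N a : ℕ) : (starRingEnd ℂ) (Complex.exp (-(2 * Real.pi * Complex.I * a) / N)) = Complex.exp ((2 * Real.pi * Complex.I * a) / N) := by
  rw [← Complex.exp_conj]
  congr 1
  simp [map_div₀, Complex.conj_I, map_ofNat]

-- orthogonality over k
lemma sum_k_orth (N : ℕ) [NeZero N] (n n' : ZMod N) :
    ∑ k ∈ Finset.range N,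
      Complex.exp (-(2 * Real.pi * Complex.I * (k:ℂ) * (n.val:ℂ)) / N) *
        (starRingEnd ℂ) (Complex.exp (-(2 * Real.pi * Complex.I * (k:ℂ) * (n'.val:ℂ)) / N))
      = if n' = n then (N:ℂ) else 0 := by
  have hNC : (N:ℂ) ≠ 0 := Nat.cast_ne_zero.mpr (NeZero.ne N)
  have key : ∀ k ∈ Finset.range N,
      Complex.exp (-(2 * Real.pi * Complex.I * (k:ℂ) * (n.val:ℂ)) / N) *
        (starRingEnd ℂ) (Complex.exp (-(2 * Real.pi * Complex.I * (k:ℂ) * (n'.val:ℂ)) / N))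
      = (Complex.exp (-(2 * Real.pi * Complex.I * (((n.val:ℤ) - (n'.val:ℤ) : ℤ):ℂ)) / N)) ^ k := by
    intro k _
    rw [show (-(2 * Real.pi * Complex.I * (k:ℂ) * (n'.val:ℂ)) / N : ℂ) = (-(2 * Real.pi * Complex.I * ((k*n'.val : ℕ):ℂ)) / N) by push_cast; ring]
    rw [conj_eN, ← Complex.exp_nat_mul, ← Complex.exp_add]
    congr 1
    push_cast
    field_simp
    ring
  rw [Finset.sum_congr rfl key, geom_dft N (Nat.pos_of_ne_zero (NeZero.ne N)) _]
  congr 1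
  · rw [eq_iff_iff]
    constructor
    · intro h
      have h0 : (n.val:ℤ) - n'.val = 0 := by
        apply Int.eq_zero_of_abs_lt_dvd h
        have h1 := ZMod.val_lt n
        have h2 := ZMod.val_lt n'
        rw [abs_lt]
        omega
      have : n.val = n'.val := by omega
      exact (ZMod.val_injective N this).symm
    · rintro rfl; simp

lemma mul_conj_norm (z : ℂ) : z * (starRingEnd ℂ) z = ((‖z‖^2:ℝ):ℂ) := by
  rw [Complex.mul_conj]
  norm_cast
  rw [Complex.normSq_eq_norm_sq]

lemma Zsum (N L : ℕ) [NeZero N] (x w : ZMod N → ℂ) (m' : ℕ) :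
    ((∑ k ∈ Finset.range N, ‖stft L x w m' k‖^2 : ℝ) : ℂ)
      = (N:ℂ)⁻¹ * ∑ n : ZMod N,
          ((‖x n‖^2:ℝ):ℂ) * ((‖w (((L*m':ℕ):ZMod N) - n)‖^2:ℝ):ℂ) := by
  have hNC : (N:ℂ) ≠ 0 := Nat.cast_ne_zero.mpr (NeZero.ne N)
  set c : ZMod N := ((L*m' : ℕ) : ZMod N) with hc
  push_cast
  have hterm : ∀ k : ℕ, ((‖stft L x w m' k‖:ℝ):ℂ)^2
      = (N:ℂ)⁻¹ * (N:ℂ)⁻¹ * ∑ n : ZMod N, ∑ n' : ZMod N,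
          ((x n * w (c - n)) * (starRingEnd ℂ) (x n' * w (c - n'))) *
          (Complex.exp (-(2 * Real.pi * Complex.I * (k:ℂ) * (n.val:ℂ)) / N) *
            (starRingEnd ℂ) (Complex.exp (-(2 * Real.pi * Complex.I * (k:ℂ) * (n'.val:ℂ)) / N))) := by
    intro k
    have : ((‖stft L x w m' k‖:ℝ):ℂ)^2 = stft L x w m' k * (starRingEnd ℂ) (stft L x w m' k) := by
      rw [mul_conj_norm]; push_cast; ring
    rw [this]
    rw [stft, map_mul, map_sum]
    rw [mul_mul_mul_comm, Finset.sum_mul_sum]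
    congr 1
    · simp
    refine Finset.sum_congr rfl (fun n _ => Finset.sum_congr rfl (fun n' _ => ?_))
    rw [map_mul]
    ring
  rw [Finset.sum_congr rfl (fun k _ => hterm k)]
  rw [← Finset.mul_sum]
  rw [Finset.sum_comm]
  have inner : ∀ n : ZMod N, (∑ k ∈ Finset.range N, ∑ n' : ZMod N,
          ((x n * w (c - n)) * (starRingEnd ℂ) (x n' * w (c - n'))) *
          (Complex.exp (-(2 * Real.pi * Complex.I * (k:ℂ) * (n.val:ℂ)) / N) *
            (starRingEnd ℂ) (Complex.exp (-(2 * Real.pi * Complex.I * (k:ℂ) * (n'.val:ℂ)) / N))))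
      = (N:ℂ) * (((‖x n‖:ℝ):ℂ)^2 * ((‖w (c - n)‖:ℝ):ℂ)^2) := by
    intro n
    rw [Finset.sum_comm]
    have h1 : ∀ n' : ZMod N, (∑ k ∈ Finset.range N,
          ((x n * w (c - n)) * (starRingEnd ℂ) (x n' * w (c - n'))) *
          (Complex.exp (-(2 * Real.pi * Complex.I * (k:ℂ) * (n.val:ℂ)) / N) *
            (starRingEnd ℂ) (Complex.exp (-(2 * Real.pi * Complex.I * (k:ℂ) * (n'.val:ℂ)) / N))))
        = ((x n * w (c - n)) * (starRingEnd ℂ) (x n' * w (c - n'))) *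
            (if n' = n then (N:ℂ) else 0) := by
      intro n'
      rw [← Finset.mul_sum, sum_k_orth]
    rw [Finset.sum_congr rfl (fun n' _ => h1 n')]
    simp only [mul_ite, mul_zero]
    rw [Finset.sum_ite_eq' Finset.univ n]
    simp only [Finset.mem_univ, if_pos]
    have e1 := mul_conj_norm (x n)
    have e2 := mul_conj_norm (w (c - n))
    push_cast at e1 e2 ⊢
    rw [map_mul]
    linear_combination ((N:ℂ) * (w (c-n) * (starRingEnd ℂ) (w (c-n)))) * e1 + ((N:ℂ) * ((‖x n‖:ℝ):ℂ)^2) * e2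
  rw [Finset.sum_congr rfl (fun n _ => inner n), ← Finset.mul_sum]
  field_simp

lemma eN_pow (N t j : ℕ) : eN N (j * t) = (eN N t) ^ j := by
  rw [eN, eN, ← Complex.exp_nat_mul]
  congr 1
  push_cast
  ring

lemma reindex (N L : ℕ) [NeZero N] (hL : 0 < L) (hdvd : L ∣ N) (B : ZMod N → ℂ) (m : ℕ) (n : ZMod N) :
    ∑ m' ∈ Finset.range (N/L), B (((L*m':ℕ):ZMod N) - n) *
        Complex.exp (-(2 * Real.pi * Complex.I * (m:ℂ) * (m':ℂ) * (L:ℂ)) / N)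
      = ∑ p ∈ Finset.univ.filter (fun p : ZMod N => L ∣ (n.val + p.val)),
          B p * eN N (m * (n.val + p.val)) := by
  have hN : 0 < N := Nat.pos_of_ne_zero (NeZero.ne N)
  have hNL : L * (N / L) = N := Nat.mul_div_cancel' hdvd
  have hlt : ∀ m' ∈ Finset.range (N/L), L * m' < N := by
    intro m' hm'
    rw [Finset.mem_range] at hm'
    calc L * m' < L * (N/L) := (Nat.mul_lt_mul_left hL).mpr hm'
    _ = N := hNL
  have hval : ∀ m' ∈ Finset.range (N/L), (n + (((L*m':ℕ):ZMod N) - n)).val = L * m' := by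
    intro m' hm'
    rw [add_sub_cancel]
    exact ZMod.val_cast_of_lt (hlt m' hm')
  refine Finset.sum_nbij' (fun m' => ((L*m':ℕ):ZMod N) - n)
    (fun p => (n + p).val / L) ?_ ?_ ?_ ?_ ?_
  · intro m' hm'
    simp only [Finset.mem_filter, Finset.mem_univ, true_and]
    rw [← Nat.dvd_mod_iff hdvd, ← ZMod.val_add, hval m' hm']
    exact Dvd.intro _ rfl
  · intro p _
    rw [Finset.mem_range]
    exact Nat.div_lt_div_of_lt_of_dvd hdvd (ZMod.val_lt _)
  · intro m' hm'
    show (n + (((L*m':ℕ):ZMod N) - n)).val / L = m'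
    rw [hval m' hm', Nat.mul_div_cancel_left m' hL]
  · intro p hp
    simp only [Finset.mem_filter, Finset.mem_univ, true_and] at hp
    have hdL : L ∣ (n + p).val := by
      rw [ZMod.val_add, Nat.dvd_mod_iff hdvd]
      exact hp
    show ((L * ((n + p).val / L) : ℕ) : ZMod N) - n = p
    rw [Nat.mul_div_cancel' hdL]
    simp only [ZMod.natCast_val, ZMod.cast_id]
    exact add_sub_cancel_left n p
  · intro m' hm'
    congr 1
    have h1 : (n.val + (((L*m':ℕ):ZMod N) - n).val) % N = (L * m') % N := by
      rw [← ZMod.val_add, hval m' hm']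
      exact (Nat.mod_eq_of_lt (hlt m' hm')).symm
    have h2 : eN N (m * (n.val + (((L*m':ℕ):ZMod N) - n).val)) = eN N (m * (L * m')) := by
      apply eN_congr
      exact Nat.ModEq.mul_left m h1
    rw [h2, eN]
    congr 1
    push_cast
    ring

lemma sum_j (N L : ℕ) [NeZero N] (hL : 0 < L) (hdvd : L ∣ N) (s : ℕ) :
    ∑ j' ∈ Finset.range L, eN N (j' * ((N/L) * s)) = if L ∣ s then (L:ℂ) else 0 := by
  have hNC : (N:ℂ) ≠ 0 := Nat.cast_ne_zero.mpr (NeZero.ne N)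
  have hLC : (L:ℂ) ≠ 0 := Nat.cast_ne_zero.mpr hL.ne'
  have hNL : (L:ℂ) * ((N/L : ℕ):ℂ) = (N:ℂ) := by
    rw [← Nat.cast_mul, Nat.mul_div_cancel' hdvd]
  have hbase : eN N ((N/L) * s) = Complex.exp (-(2 * Real.pi * Complex.I * ((s:ℤ):ℂ)) / L) := by
    rw [eN]
    congr 1
    push_cast
    rw [div_eq_div_iff hNC hLC]
    rw [← hNL]
    ring
  rw [Finset.sum_congr rfl (fun j' (_ : j' ∈ Finset.range L) => by rw [eN_pow, hbase])]
  rw [geom_dft L hL (s:ℤ)]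
  simp [Int.natCast_dvd_natCast]

lemma dftSq_eq {N : ℕ} [NeZero N] (u : ZMod N → ℂ) (k : ℕ) :
    dftSq u k = (N:ℂ)⁻¹ * ∑ n : ZMod N, ((‖u n‖^2:ℝ):ℂ) * eN N (k * n.val) := by
  rw [dftSq]
  congr 1
  refine Finset.sum_congr rfl (fun n _ => ?_)
  rw [eN]
  congr 2
  push_cast
  ring

/-- `(L/N) ∑_{m'} Z(w, m') e^{-2πi m m' L / N} = ∑_{j'=0}^{L-1} α(m+j'N/L) β(m+j'N/L)`. -/
theorem stmt6 (N L : ℕ) [NeZero N] (hL : 0 < L) (hdvd : L ∣ N)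
    (w x : ZMod N → ℂ) (m : ℕ) (hm : m < N / L) :
    (L : ℂ) / (N : ℂ) * ∑ m' ∈ Finset.range (N / L),
        ((∑ k ∈ Finset.range N, ‖stft L x w m' k‖ ^ 2 : ℝ) : ℂ) *
          Complex.exp (-(2 * Real.pi * Complex.I * (m : ℂ) * (m' : ℂ) * (L : ℂ)) / (N : ℂ)) =
      ∑ j' ∈ Finset.range L, dftSq x (m + j' * (N / L)) * dftSq w (m + j' * (N / L)) := by
  have hNC : (N:ℂ) ≠ 0 := Nat.cast_ne_zero.mpr (NeZero.ne N)
  set A : ZMod N → ℂ := fun n => ((‖x n‖^2:ℝ):ℂ) with hA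
  set B : ZMod N → ℂ := fun p => ((‖w p‖^2:ℝ):ℂ) with hB
  -- LHS transformation
  have step1 : ∀ m' ∈ Finset.range (N/L),
      ((∑ k ∈ Finset.range N, ‖stft L x w m' k‖ ^ 2 : ℝ) : ℂ) *
          Complex.exp (-(2 * Real.pi * Complex.I * (m : ℂ) * (m' : ℂ) * (L : ℂ)) / (N : ℂ))
      = (N:ℂ)⁻¹ * ∑ n : ZMod N, A n * (B (((L*m':ℕ):ZMod N) - n) *
          Complex.exp (-(2 * Real.pi * Complex.I * (m : ℂ) * (m' : ℂ) * (L : ℂ)) / (N : ℂ))) := by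
    intro m' _
    rw [Zsum, mul_assoc, Finset.sum_mul]
    congr 1
    refine Finset.sum_congr rfl (fun n _ => ?_)
    ring
  rw [Finset.sum_congr rfl step1, ← Finset.mul_sum, Finset.sum_comm]
  have step2 : ∀ n : ZMod N, (∑ m' ∈ Finset.range (N/L), A n * (B (((L*m':ℕ):ZMod N) - n) *
          Complex.exp (-(2 * Real.pi * Complex.I * (m : ℂ) * (m' : ℂ) * (L : ℂ)) / (N : ℂ))))
      = A n * ∑ p ∈ Finset.univ.filter (fun p : ZMod N => L ∣ (n.val + p.val)),
          B p * eN N (m * (n.val + p.val)) := by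
    intro n
    rw [← Finset.mul_sum, reindex N L hL hdvd B m n]
  rw [Finset.sum_congr rfl (fun n _ => step2 n)]
  -- RHS transformation
  have step3 : ∀ j' ∈ Finset.range L,
      dftSq x (m + j' * (N / L)) * dftSq w (m + j' * (N / L))
      = (N:ℂ)⁻¹ * (N:ℂ)⁻¹ * ∑ n : ZMod N, ∑ p : ZMod N,
          A n * (B p * (eN N (m * (n.val + p.val)) * eN N (j' * ((N/L) * (n.val + p.val))))) := by
    intro j' _
    rw [dftSq_eq, dftSq_eq, mul_mul_mul_comm, Finset.sum_mul_sum]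
    congr 1
    refine Finset.sum_congr rfl (fun n _ => Finset.sum_congr rfl (fun p _ => ?_))
    have harith : (m + j' * (N/L)) * n.val + (m + j' * (N/L)) * p.val
        = m * (n.val + p.val) + j' * ((N/L) * (n.val + p.val)) := by ring
    rw [show A n * eN N ((m + j' * (N/L)) * n.val) * (B p * eN N ((m + j' * (N/L)) * p.val))
        = A n * (B p * (eN N ((m + j' * (N/L)) * n.val) * eN N ((m + j' * (N/L)) * p.val))) from by ring,
      ← eN_add, harith, eN_add]
  rw [Finset.sum_congr rfl step3, ← Finset.mul_sum, Finset.sum_comm]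
  have step4 : ∀ n : ZMod N, (∑ j' ∈ Finset.range L, ∑ p : ZMod N,
          A n * (B p * (eN N (m * (n.val + p.val)) * eN N (j' * ((N/L) * (n.val + p.val))))))
      = (L:ℂ) * (A n * ∑ p ∈ Finset.univ.filter (fun p : ZMod N => L ∣ (n.val + p.val)),
          B p * eN N (m * (n.val + p.val))) := by
    intro n
    rw [Finset.sum_comm]
    have h5 : ∀ p : ZMod N, (∑ j' ∈ Finset.range L,
          A n * (B p * (eN N (m * (n.val + p.val)) * eN N (j' * ((N/L) * (n.val + p.val))))))
        = A n * (B p * eN N (m * (n.val + p.val))) * (if L ∣ (n.val + p.val) then (L:ℂ) else 0) := by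
      intro p
      rw [← sum_j N L hL hdvd (n.val + p.val), Finset.mul_sum]
      refine Finset.sum_congr rfl (fun j' _ => ?_)
      ring
    rw [Finset.sum_congr rfl (fun p _ => h5 p)]
    rw [Finset.mul_sum, Finset.mul_sum, Finset.sum_filter]
    refine Finset.sum_congr rfl (fun p _ => ?_)
    by_cases hp : L ∣ (n.val + p.val) <;> simp [hp] <;> ring
  rw [Finset.sum_congr rfl (fun n _ => step4 n), ← Finset.mul_sum]
  field_simp
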